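/- Let K be a field, a ≥ 1, and let M_0, …, M_{a-1} be n×n matrices over K. Form the block matrix V of size an × an with (block) entries V_{i+1,i} = M_i for 0 ≤ i ≤ a−2, V_{0,a−1} = M_{a−1}, and all other blocks zero. Then det(1 − (M_{a-1}⋯M_1 M_0)·T^a) = det(1 − V·T) in K[T]. -/

import Mathlib

open Matrix Polynomial

private lemma listProdSmul {R : Type*} [CommRing R] {n : ℕ}
    (c : R) (l : List (Matrix (Fin n) (Fin n) R)) :
    (l.map (fun A => c • A)).prod = c ^ l.length • l.prod := by
  induction l with
  | nil => simp
  | cons h t ih =>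
      simp only [List.map_cons, List.prod_cons, ih, List.length_cons]
      rw [smul_mul_assoc, mul_smul_comm, smul_smul, ← pow_succ']

set_option maxHeartbeats 2000000 in
private lemma key {R : Type*} [CommRing R] (b n : ℕ)
    (N : Fin (b+1) → Matrix (Fin n) (Fin n) R)
    (W : Matrix (Fin (b+1) × Fin n) (Fin (b+1) × Fin n) R)
    (hW : ∀ (r c : Fin (b+1)) (x y : Fin n),
      W (r, x) (c, y) = if r = c + 1 then N c x y else 0) :
    (1 - (List.ofFn N).reverse.prod).det = (1 - W).det := by
  rcases Nat.eq_zero_or_pos n with hn | hn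
  · subst hn
    simp [Matrix.det_isEmpty]
  set Q : ℕ → Matrix (Fin n) (Fin n) R :=
    fun i => (((List.ofFn N).drop i).reverse).prod with hQdef
  have hQstep : ∀ i (h : i < b+1), Q i = Q (i+1) * N ⟨i, h⟩ := by
    intro i h
    have hl : (List.ofFn N).drop i = N ⟨i, h⟩ :: (List.ofFn N).drop (i+1) := by
      rw [List.drop_eq_getElem_cons (by simpa using h)]
      simp only [List.getElem_ofFn]
    simp only [hQdef]
    rw [hl, List.reverse_cons, List.prod_append, List.prod_singleton]
  have hQ0 : Q 0 = (List.ofFn N).reverse.prod := by simp [hQdef]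
  have hQb : Q b = N (Fin.last b) := by
    have h1 := hQstep b (Nat.lt_succ_self b)
    have h2 : Q (b+1) = 1 := by
      simp only [hQdef]
      rw [List.drop_of_length_le (by simp)]
      simp
    rw [h2, one_mul] at h1
    rw [h1]; rfl
  have hsucc : ∀ r c : Fin (b+1), r = c + 1 ↔
      ((r:ℕ) = (c:ℕ) + 1 ∨ ((r:ℕ) = 0 ∧ (c:ℕ) = b)) := by
    intro r c
    have hr := r.isLt
    have hc := c.isLt
    rw [Fin.ext_iff, Fin.val_add_one]
    rcases eq_or_ne c (Fin.last b) with h | h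
    · subst h
      simp only [eq_self_iff_true, if_true, Fin.val_last, and_true]
      omega
    · have hcb : (c:ℕ) ≠ b := fun hh => h (Fin.ext (by simpa using hh))
      rw [if_neg h]
      omega
  set G2 : Matrix (Fin (b+1) × Fin n) (Fin (b+1) × Fin n) R :=
    Matrix.of (fun p q => if (p.1:ℕ) = 0 ∧ (q.1:ℕ) ≠ 0 then Q (q.1:ℕ) p.2 q.2 else 0)
    with hG2def
  set H : Matrix (Fin (b+1) × Fin n) (Fin (b+1) × Fin n) R :=
    Matrix.of (fun p q => if (p.1:ℕ) = 0 ∧ (q.1:ℕ) < b then Q (q.1:ℕ) p.2 q.2 else 0)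
    with hHdef
  set L : Matrix (Fin (b+1) × Fin n) (Fin (b+1) × Fin n) R :=
    Matrix.of (fun p q =>
      (if p.1 = q.1 ∧ p.2 = q.2 ∧ (p.1:ℕ) ≠ 0 then 1 else 0)
      + (if (p.1:ℕ) = 0 ∧ (q.1:ℕ) = 0 then (1 - Q 0) p.2 q.2 else 0)
      + (if (p.1:ℕ) = (q.1:ℕ) + 1 then -(N q.1 p.2 q.2) else 0))
    with hLdef
  have hGW : G2 * W = H := by
    ext ⟨r, x⟩ ⟨c, y⟩
    rw [Matrix.mul_apply, Fintype.sum_prod_type]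
    have step1 : ∀ k : Fin (b+1),
        (∑ z : Fin n, G2 (r, x) (k, z) * W (k, z) (c, y)) =
        if (((r:ℕ) = 0 ∧ (k:ℕ) ≠ 0) ∧ k = c + 1) then (Q (k:ℕ) * N c) x y else 0 := by
      intro k
      split_ifs with h
      · obtain ⟨⟨h1, h2⟩, h3⟩ := h
        rw [Matrix.mul_apply]
        apply Finset.sum_congr rfl
        intro z _
        rw [hW]
        simp only [hG2def, Matrix.of_apply]
        rw [if_pos ⟨h1, h2⟩, if_pos h3]
      · apply Finset.sum_eq_zero
        intro z _
        rw [hW]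
        simp only [hG2def, Matrix.of_apply]
        by_cases h1 : (r:ℕ) = 0 ∧ (k:ℕ) ≠ 0
        · have h3 : ¬ (k = c + 1) := fun hh => h ⟨h1, hh⟩
          rw [if_neg h3, mul_zero]
        · rw [if_neg h1, zero_mul]
    rw [Finset.sum_congr rfl (fun k _ => step1 k)]
    rw [Finset.sum_eq_single (c+1)]
    · simp only [hHdef, Matrix.of_apply]
      rcases eq_or_ne c (Fin.last b) with hc | hc
      · subst hc
        have h0 : ((Fin.last b + 1 : Fin (b+1)) : ℕ) = 0 := by
          rw [Fin.last_add_one]; rfl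
        rw [if_neg (by simp [h0]), if_neg (by simp [Fin.val_last])]
      · have hlt : c < Fin.last b := lt_of_le_of_ne (Fin.le_last c) hc
        have hv : ((c + 1 : Fin (b+1)) : ℕ) = (c:ℕ) + 1 := Fin.val_add_one_of_lt hlt
        have hcb : (c:ℕ) < b := by
          have h1 := c.isLt
          have h2 : (c:ℕ) ≠ b := fun hh => hc (Fin.ext (by simp [hh, Fin.val_last]))
          omega
        have hQc : Q ((c:ℕ)+1) * N c = Q (c:ℕ) := by
          have := hQstep (c:ℕ) c.isLt
          simp only [Fin.eta] at this
          exact this.symm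
        rw [hv]
        split_ifs with h1 h2 h2
        · rw [hQc]
        · exact absurd ⟨h1.1.1, hcb⟩ h2
        · exfalso
          apply h1
          refine ⟨⟨h2.1, by omega⟩, ?_⟩
          trivial
        · rfl
    · intro k _ hk
      rw [if_neg (by tauto)]
    · intro hmem
      exact absurd (Finset.mem_univ _) hmem
  have hGL : (1 + G2) * (1 - W) = L := by
    have hexp : (1 + G2) * (1 - W) = 1 - W + (G2 - G2 * W) := by
      rw [add_mul, one_mul, mul_sub, mul_one]
    rw [hexp, hGW]
    ext ⟨r, x⟩ ⟨c, y⟩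
    simp only [Matrix.add_apply, Matrix.sub_apply, Matrix.one_apply, hW, hG2def, hHdef,
      hLdef, Matrix.of_apply, Prod.mk.injEq, hsucc]
    simp only [Fin.ext_iff]
    have hrl := r.isLt
    have hcl := c.isLt
    by_cases h1 : (r:ℕ) = 0
    · by_cases h2 : (c:ℕ) = 0
      · simp only [h2]
        rcases Nat.eq_zero_or_pos b with hb | hb
        · have hc' : c = Fin.last b := Fin.ext (by simp [Fin.val_last]; omega)
          have hN : Q 0 = N c := by
            rw [hc', ← hQb, hb]
          rw [← hN]
          subst hb
          simp only [h1]
          norm_num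
        · simp only [h1, show ¬((0:ℕ) = b) by omega, show (0:ℕ) < b from hb]
          norm_num
          ring
      · by_cases hcb : (c:ℕ) = b
        · have hc' : c = Fin.last b := Fin.ext (by simp [Fin.val_last]; omega)
          have hN : Q (c:ℕ) = N c := by
            rw [hcb, hQb, hc']
          rw [← hN]
          simp only [h1, hcb, show ¬((0:ℕ) = b) by omega, show b ≠ 0 by omega]
          norm_num
          rw [if_neg (show ¬(b = 0) by omega)]
          ring
        · simp only [h1, h2, show ¬((0:ℕ) = (c:ℕ)) from fun hh => h2 hh.symm,
            show ((c:ℕ) < b) by omega, show ¬((c:ℕ) = b) from hcb,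
            show ¬((0:ℕ) = (c:ℕ) + 1) by omega]
          norm_num
          rw [if_neg (show ¬ c = 0 from fun hh => h2 (by simp [hh]))]
          ring
    · simp only [h1]
      norm_num
      have h1' : r ≠ 0 := fun hh => h1 (by simp [hh])
      simp only [h1', not_false_eq_true, and_true]
      split_ifs <;> first | (exfalso; omega) | ring
  have hdetG : (1 + G2).det = 1 := by
    have hBT : ((1 : Matrix (Fin (b+1) × Fin n) (Fin (b+1) × Fin n) R) + G2).BlockTriangular
        Prod.fst := by
      intro p q hlt
      have hne : p ≠ q := by
        intro hpq; rw [hpq] at hlt; exact lt_irrefl _ hlt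
      rw [Matrix.add_apply, Matrix.one_apply_ne hne, hG2def, Matrix.of_apply, zero_add]
      rw [Fin.lt_def] at hlt
      rw [if_neg (by omega)]
    rw [hBT.det]
    apply Finset.prod_eq_one
    intro k _
    have hblk : ((1 : Matrix (Fin (b+1) × Fin n) (Fin (b+1) × Fin n) R) + G2).toSquareBlock
        Prod.fst k = 1 := by
      ext p q
      have hp : p.val.1 = k := p.prop
      have hq : q.val.1 = k := q.prop
      simp only [Matrix.toSquareBlock_def, Matrix.of_apply, Matrix.add_apply, hG2def]
      have hcond : ¬((p.val.1 : ℕ) = 0 ∧ (q.val.1 : ℕ) ≠ 0) := by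
        rw [hp, hq]; omega
      rw [if_neg hcond, add_zero]
      by_cases hpq : p = q
      · subst hpq
        rw [Matrix.one_apply_eq, Matrix.one_apply_eq]
      · rw [Matrix.one_apply_ne (fun hh => hpq (Subtype.ext hh)),
          Matrix.one_apply_ne hpq]
    rw [hblk, Matrix.det_one]
  have hdetL : L.det = (1 - Q 0).det := by
    have hBT : L.BlockTriangular (fun p : Fin (b+1) × Fin n => OrderDual.toDual p.1) := by
      intro p q hlt
      have hv : (p.1 : ℕ) < (q.1 : ℕ) := by
        have h2 : p.1 < q.1 := hlt
        exact Fin.lt_def.mp h2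
      simp only [hLdef, Matrix.of_apply, Fin.ext_iff]
      split_ifs <;> first | (exfalso; omega) | ring
    rw [hBT.det]
    have hblock : ∀ d : Fin (b+1),
        (L.toSquareBlock (fun p : Fin (b+1) × Fin n => OrderDual.toDual p.1)
          (OrderDual.toDual d)).det
        = (Matrix.of (fun x y : Fin n => L (d, x) (d, y))).det := by
      intro d
      let e : Fin n ≃ {p : Fin (b+1) × Fin n //
          OrderDual.toDual p.1 = OrderDual.toDual d} :=
        { toFun := fun x => ⟨(d, x), rfl⟩
          invFun := fun s => s.val.2
          left_inv := fun x => rfl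
          right_inv := fun s =>
            Subtype.ext (Prod.ext_iff.mpr ⟨(OrderDual.toDual_inj.mp s.prop).symm, rfl⟩) }
      rw [← Matrix.det_submatrix_equiv_self e]
      congr 1
    have hmem : OrderDual.toDual (0 : Fin (b+1)) ∈ Finset.univ.image
        (fun p : Fin (b+1) × Fin n => OrderDual.toDual p.1) :=
      Finset.mem_image.mpr ⟨(0, ⟨0, hn⟩), Finset.mem_univ _, rfl⟩
    rw [Finset.prod_eq_single_of_mem _ hmem ?_]
    · rw [hblock 0]
      congr 1
      ext x y
      simp [hLdef, Matrix.sub_apply, Matrix.one_apply]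
    · intro k _ hk
      have hkd : k = OrderDual.toDual (OrderDual.ofDual k) := rfl
      set d : Fin (b+1) := OrderDual.ofDual k with hdk
      have hd : (d : ℕ) ≠ 0 := by
        intro hd0
        apply hk
        rw [hkd, OrderDual.toDual_inj]
        exact Fin.ext (by simpa using hd0)
      rw [hkd, hblock d]
      have hone : (Matrix.of (fun x y : Fin n => L (d, x) (d, y))) = 1 := by
        ext x y
        simp [hLdef, Matrix.one_apply, hd, show d ≠ 0 from fun hh => hd (by simp [hh])]
      rw [hone, Matrix.det_one]
  have hdet1 : (1 - W).det = L.det := by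
    have hd := congrArg Matrix.det hGL
    rwa [Matrix.det_mul, hdetG, one_mul] at hd
  rw [← hQ0, hdet1, hdetL]

/-- Block-cyclic determinant identity: if `V` is the `an × an` block matrix with block
`M_i` in block position `(i+1 mod a, i)` and zeros elsewhere, then
`det(1 − (M_{a-1}⋯M_1M_0)·T^a) = det(1 − V·T)` in `K[T]`. -/
theorem stmt1 {K : Type*} [Field K] (a n : ℕ) [NeZero a]
    (M : Fin a → Matrix (Fin n) (Fin n) K)
    (V : Matrix (Fin a × Fin n) (Fin a × Fin n) K)
    (hV : ∀ (r c : Fin a) (x y : Fin n),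
      V (r, x) (c, y) = if r = c + 1 then M c x y else 0) :
    Matrix.det (1 - (Polynomial.X : Polynomial K) ^ a •
        (((List.ofFn M).reverse.prod).map Polynomial.C)) =
    Matrix.det (1 - (Polynomial.X : Polynomial K) • V.map Polynomial.C) := by
  obtain ⟨b, rfl⟩ : ∃ b, a = b + 1 := ⟨a - 1, by have := NeZero.ne a; omega⟩
  have hprod : (List.ofFn (fun i : Fin (b+1) =>
        (Polynomial.X : Polynomial K) • (M i).map Polynomial.C)).reverse.prod
      = (Polynomial.X : Polynomial K) ^ (b+1) •
          (((List.ofFn M).reverse.prod).map Polynomial.C) := by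
    have h1 : List.ofFn (fun i : Fin (b+1) =>
          (Polynomial.X : Polynomial K) • (M i).map Polynomial.C)
        = (List.ofFn M).map
          (fun A => (Polynomial.X : Polynomial K) • A.map Polynomial.C) := by
      rw [List.map_ofFn]; rfl
    rw [h1, ← List.map_reverse]
    have h2 : ((List.ofFn M).reverse.map
        (fun A => (Polynomial.X : Polynomial K) • A.map Polynomial.C))
        = (((List.ofFn M).reverse.map (fun A => A.map Polynomial.C)).map
            (fun B => (Polynomial.X : Polynomial K) • B)) := by
      rw [List.map_map]; rfl
    rw [h2, listProdSmul]
    have h3 : ((List.ofFn M).reverse.map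
          (fun A : Matrix (Fin n) (Fin n) K => A.map (Polynomial.C : K →+* Polynomial K))).prod
        = ((List.ofFn M).reverse.prod).map Polynomial.C := by
      have h4 := map_list_prod (RingHom.mapMatrix (Polynomial.C : K →+* Polynomial K) :
          Matrix (Fin n) (Fin n) K →+* Matrix (Fin n) (Fin n) (Polynomial K))
          (List.ofFn M).reverse
      simp only [RingHom.mapMatrix_apply] at h4
      exact h4.symm
    rw [h3]
    congr 2
    simp
  have hW : ∀ (r c : Fin (b+1)) (x y : Fin n),
      ((Polynomial.X : Polynomial K) • V.map Polynomial.C) (r, x) (c, y)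
        = if r = c + 1 then
            ((Polynomial.X : Polynomial K) • (M c).map Polynomial.C) x y else 0 := by
    intro r c x y
    rw [Matrix.smul_apply, Matrix.map_apply, hV]
    split_ifs with h
    · rfl
    · simp
  rw [← hprod]
  exact key b n _ _ hW
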